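/- The coreness of a vertex v equals the largest s such that v has at least s neighbors of coreness at least s; that is, coreness(v) = max{s : |{u ∈ N(v) : coreness(u) ≥ s}| ≥ s} (with the maximum over s ≥ 0, taking s = 0 always admissible). -/
import Mathlib


open scoped Classical
open Finset

noncomputable section

variable {V : Type*} [Fintype V]

/-- `S` induces a subgraph of `G` in which every vertex has degree at least `k`. -/
def IsCoreSet (G : SimpleGraph V) (k : ℕ) (S : Finset V) : Prop :=
  ∀ v ∈ S, k ≤ (S.filter (G.Adj v)).card

/-- The vertex set of the `k`-core of `G`: all vertices lying in some induced
subgraph of minimum degree at least `k`. -/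
def coreSet (G : SimpleGraph V) (k : ℕ) : Finset V :=
  Finset.univ.filter fun v => ∃ S : Finset V, IsCoreSet G k S ∧ v ∈ S

/-- The coreness of `v`: the largest `k` such that `v` belongs to the `k`-core. -/
def coreness (G : SimpleGraph V) (v : V) : ℕ :=
  Nat.findGreatest (fun k => v ∈ coreSet G k) (Fintype.card V)

lemma findGreatest_pos_spec {P : ℕ → Prop} [DecidablePred P] {n : ℕ}
    (h : 0 < Nat.findGreatest P n) : P (Nat.findGreatest P n) :=
  (Nat.findGreatest_eq_iff.1 rfl).2.1 h.ne'

lemma subset_coreSet {G : SimpleGraph V} {k : ℕ} {S : Finset V}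
    (hS : IsCoreSet G k S) : S ⊆ coreSet G k := by
  intro w hw
  simp only [coreSet, mem_filter, mem_univ, true_and]
  exact ⟨S, hS, hw⟩

lemma isCoreSet_coreSet (G : SimpleGraph V) (k : ℕ) : IsCoreSet G k (coreSet G k) := by
  intro w hw
  simp only [coreSet, mem_filter, mem_univ, true_and] at hw
  obtain ⟨S, hS, hwS⟩ := hw
  calc k ≤ (S.filter (G.Adj w)).card := hS w hwS
    _ ≤ ((coreSet G k).filter (G.Adj w)).card :=
      card_le_card (filter_subset_filter _ (subset_coreSet hS))

lemma coreSet_anti {G : SimpleGraph V} {k l : ℕ} (h : k ≤ l) :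
    coreSet G l ⊆ coreSet G k := by
  intro w hw
  simp only [coreSet, mem_filter, mem_univ, true_and] at hw ⊢
  obtain ⟨S, hS, hwS⟩ := hw
  exact ⟨S, fun u hu => le_trans h (hS u hu), hwS⟩

lemma mem_coreSet_iff_le_coreness {G : SimpleGraph V} {k : ℕ} {u : V} :
    u ∈ coreSet G k ↔ k ≤ coreness G u := by
  constructor
  · intro hu
    apply Nat.le_findGreatest _ hu
    calc k ≤ ((coreSet G k).filter (G.Adj u)).card := isCoreSet_coreSet G k u hu
      _ ≤ Fintype.card V := (card_le_card (filter_subset _ _)).trans (card_le_univ _)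
  · intro hk
    rcases Nat.eq_zero_or_pos k with rfl | hkpos
    · simp only [coreSet, mem_filter, mem_univ, true_and]
      exact ⟨Finset.univ, fun _ _ => Nat.zero_le _, mem_univ u⟩
    · have hc : 0 < coreness G u := lt_of_lt_of_le hkpos hk
      have := findGreatest_pos_spec (P := fun k => u ∈ coreSet G k) hc
      exact coreSet_anti hk this

theorem coreness_eq_findGreatest_neighbors (G : SimpleGraph V) [Nonempty V] (v : V) :
    coreness G v =
      Nat.findGreatest
        (fun s => s ≤ (Finset.univ.filter fun u => G.Adj v u ∧ s ≤ coreness G u).card)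
        (Fintype.card V) := by
  apply le_antisymm
  · apply Nat.le_findGreatest (Nat.findGreatest_le _)
    set k := coreness G v with hk
    have hv : v ∈ coreSet G k := mem_coreSet_iff_le_coreness.mpr le_rfl
    calc k ≤ ((coreSet G k).filter (G.Adj v)).card := isCoreSet_coreSet G k v hv
      _ ≤ (Finset.univ.filter fun u => G.Adj v u ∧ k ≤ coreness G u).card := by
        apply card_le_card
        intro u hu
        simp only [mem_filter, mem_univ, true_and] at hu ⊢
        exact ⟨hu.2, mem_coreSet_iff_le_coreness.mp hu.1⟩
  · set s := Nat.findGreatest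
        (fun s => s ≤ (Finset.univ.filter fun u => G.Adj v u ∧ s ≤ coreness G u).card)
        (Fintype.card V) with hs
    rcases Nat.eq_zero_or_pos s with h0 | hpos
    · omega
    · have hspec : s ≤ (Finset.univ.filter fun u => G.Adj v u ∧ s ≤ coreness G u).card := by
        rw [hs]
        exact findGreatest_pos_spec
          (P := fun s => s ≤ (Finset.univ.filter fun u => G.Adj v u ∧ s ≤ coreness G u).card)
          (hs ▸ hpos)
    -- build a core set containing v
      have hcore : IsCoreSet G s (insert v (coreSet G s)) := by
        intro w hw
        rcases mem_insert.mp hw with rfl | hw'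
        · calc s ≤ (Finset.univ.filter fun u => G.Adj w u ∧ s ≤ coreness G u).card := hspec
            _ ≤ ((insert w (coreSet G s)).filter (G.Adj w)).card := by
              apply card_le_card
              intro u hu
              simp only [mem_filter, mem_univ, true_and, mem_insert] at hu ⊢
              exact ⟨Or.inr (mem_coreSet_iff_le_coreness.mpr hu.2), hu.1⟩
        · calc s ≤ ((coreSet G s).filter (G.Adj w)).card := isCoreSet_coreSet G s w hw'
            _ ≤ ((insert v (coreSet G s)).filter (G.Adj w)).card :=
              card_le_card (filter_subset_filter _ (subset_insert _ _))
      have hv : v ∈ coreSet G s := by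
        simp only [coreSet, mem_filter, mem_univ, true_and]
        exact ⟨_, hcore, mem_insert_self _ _⟩
      exact mem_coreSet_iff_le_coreness.mp hv

end
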